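/- For all real w, z: ∫_{-∞}^{∞} ψ(x,w)·ψ(x,z)·e^{-x²}/(x² + 1/2)² dx = 4·e^{wz/2}·(w²z² - 4wz + 8)·√π, where ψ(x,z) = (2x²z² - 4xz + z² + 4)·e^{xz - z²/4}. In particular, the result depends on w and z only through the product wz. -/

import Mathlib

open MeasureTheory Filter Real

-- moments of gaussian
lemma int_pow_gauss (n : ℕ) (s : ℝ) :
    Integrable (fun x : ℝ => x ^ n * Real.exp (x * s - x ^ 2)) := by
  have base : ∀ k : ℕ, Integrable (fun y : ℝ => y ^ k * Real.exp (-y ^ 2)) := by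
    intro k
    have hk : (-1 : ℝ) < (k : ℝ) := lt_of_lt_of_le neg_one_lt_zero (Nat.cast_nonneg k)
    have h := integrable_rpow_mul_exp_neg_mul_sq (b := 1) one_pos hk
    simpa [Real.rpow_natCast, neg_one_mul] using h
  have hshift : Integrable (fun y : ℝ => (y + s / 2) ^ n * Real.exp (-y ^ 2)) := by
    have heq : (fun y : ℝ => (y + s / 2) ^ n * Real.exp (-y ^ 2)) =
        fun y => ∑ k ∈ Finset.range (n + 1),
          ((s / 2) ^ (n - k) * (n.choose k : ℝ)) * (y ^ k * Real.exp (-y ^ 2)) := by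
      funext y
      rw [add_pow, Finset.sum_mul]
      exact Finset.sum_congr rfl fun k _ => by ring
    rw [heq]
    exact integrable_finset_sum _ fun k _ => (base k).const_mul _
  have h2 := (hshift.comp_sub_right (s / 2)).const_mul (Real.exp (s ^ 2 / 4))
  apply h2.congr
  refine Filter.Eventually.of_forall fun x => ?_
  have h1 : x - s / 2 + s / 2 = x := by ring
  show Real.exp (s ^ 2 / 4) * ((x - s / 2 + s / 2) ^ n * Real.exp (-(x - s / 2) ^ 2))
      = x ^ n * Real.exp (x * s - x ^ 2)
  rw [h1]
  have h2' : Real.exp (s ^ 2 / 4) * Real.exp (-(x - s / 2) ^ 2) = Real.exp (x * s - x ^ 2) := by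
    rw [← Real.exp_add]; congr 1; ring
  linear_combination (x ^ n) * h2'

lemma int_gauss (s : ℝ) : Integrable (fun x : ℝ => Real.exp (x * s - x ^ 2)) := by
  simpa using int_pow_gauss 0 s

lemma int_gauss_eq (s : ℝ) :
    ∫ x : ℝ, Real.exp (x * s - x ^ 2) = Real.exp (s ^ 2 / 4) * Real.sqrt Real.pi := by
  have h1 : ∀ x : ℝ, Real.exp (x * s - x ^ 2)
      = Real.exp (s ^ 2 / 4) * Real.exp (-(x - s / 2) ^ 2) := fun x => by
    rw [← Real.exp_add]; congr 1; ring
  calc ∫ x : ℝ, Real.exp (x * s - x ^ 2)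
      = ∫ x : ℝ, Real.exp (s ^ 2 / 4) * Real.exp (-(x - s / 2) ^ 2) := by
        congr 1; funext x; exact h1 x
    _ = Real.exp (s ^ 2 / 4) * ∫ x : ℝ, Real.exp (-(x - s / 2) ^ 2) := by
        rw [integral_const_mul]
    _ = Real.exp (s ^ 2 / 4) * ∫ x : ℝ, Real.exp (-x ^ 2) := by
        rw [integral_sub_right_eq_self (fun t : ℝ => Real.exp (-t ^ 2)) (s / 2)]
    _ = Real.exp (s ^ 2 / 4) * Real.sqrt Real.pi := by
        congr 1
        simpa using integral_gaussian 1

set_option maxHeartbeats 1000000 in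
lemma key_deriv (w z x : ℝ) :
    HasDerivAt (fun t : ℝ => 16 * Real.exp (-((w ^ 2 + z ^ 2) / 4)) *
        (((1 - w * z / 2) * t + (w + z) / 2) * Real.exp (t * (w + z) - t ^ 2) / (t ^ 2 + 1 / 2)))
      ((2 * x ^ 2 * w ^ 2 - 4 * x * w + w ^ 2 + 4) * (2 * x ^ 2 * z ^ 2 - 4 * x * z + z ^ 2 + 4) *
          (Real.exp (-((w ^ 2 + z ^ 2) / 4)) * Real.exp (x * (w + z) - x ^ 2)) / (x ^ 2 + 1 / 2) ^ 2
        - 16 * Real.exp (-((w ^ 2 + z ^ 2) / 4)) * ((w * z) ^ 2 / 4 - w * z + 2) *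
            Real.exp (x * (w + z) - x ^ 2)) x := by
  have h1 : HasDerivAt (fun t : ℝ => (1 - w * z / 2) * t + (w + z) / 2) (1 - w * z / 2) x := by
    simpa using ((hasDerivAt_id x).const_mul (1 - w * z / 2)).add_const ((w + z) / 2)
  have h2 : HasDerivAt (fun t : ℝ => t * (w + z) - t ^ 2) ((w + z) - 2 * x) x := by
    exact (((hasDerivAt_id x).mul_const (w + z)).sub (hasDerivAt_pow 2 x)).congr_deriv (by norm_num)
  have h3 := h2.exp
  have h4 : HasDerivAt (fun t : ℝ => t ^ 2 + 1 / 2) (2 * x) x := by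
    simpa using (hasDerivAt_pow 2 x).add_const (1 / 2 : ℝ)
  have h5 := ((h1.mul h3).div h4 (by positivity)).const_mul
    (16 * Real.exp (-((w ^ 2 + z ^ 2) / 4)))
  refine h5.congr_deriv ?_
  have hx : (x : ℝ) ^ 2 + 1 / 2 ≠ 0 := by positivity
  simp only [Pi.mul_apply]
  field_simp
  ring

set_option maxHeartbeats 2000000 in
lemma tendsto_aux_top (C a b s : ℝ) :
    Tendsto (fun x : ℝ => C * ((a * x + b) * Real.exp (x * s - x ^ 2) / (x ^ 2 + 1 / 2)))
      atTop (nhds 0) := by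
  have hg : Tendsto (fun x : ℝ => |C| * Real.exp (s ^ 2 / 4) * (|a| * x⁻¹ + |b| * (x ^ 2)⁻¹))
      atTop (nhds 0) := by
    have h1 : Tendsto (fun x : ℝ => x⁻¹) atTop (nhds 0) := tendsto_inv_atTop_zero
    have h2 : Tendsto (fun x : ℝ => (x ^ 2)⁻¹) atTop (nhds 0) :=
      (tendsto_pow_atTop two_ne_zero).inv_tendsto_atTop
    have := ((h1.const_mul |a|).add (h2.const_mul |b|)).const_mul (|C| * Real.exp (s ^ 2 / 4))
    simpa using this
  refine squeeze_zero_norm' ?_ hg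
  filter_upwards [eventually_ge_atTop (1 : ℝ)] with x hx
  have hx0 : (0 : ℝ) < x := lt_of_lt_of_le one_pos hx
  have hx2 : (0 : ℝ) < x ^ 2 := by positivity
  have hden : (0 : ℝ) < x ^ 2 + 1 / 2 := by positivity
  have hEle : Real.exp (x * s - x ^ 2) ≤ Real.exp (s ^ 2 / 4) := by
    apply Real.exp_le_exp.mpr; nlinarith [sq_nonneg (x - s / 2)]
  have habs : |a * x + b| ≤ |a| * x + |b| := by
    refine (abs_add_le _ _).trans ?_
    rw [abs_mul, abs_of_pos hx0]
  rw [Real.norm_eq_abs, abs_mul, abs_div, abs_mul, abs_of_pos (Real.exp_pos _), abs_of_pos hden]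
  have hnum : |a * x + b| * Real.exp (x * s - x ^ 2) ≤ (|a| * x + |b|) * Real.exp (s ^ 2 / 4) :=
    mul_le_mul habs hEle (Real.exp_pos _).le (by positivity)
  have hfrac : |a * x + b| * Real.exp (x * s - x ^ 2) / (x ^ 2 + 1 / 2)
      ≤ (|a| * x + |b|) * Real.exp (s ^ 2 / 4) / x ^ 2 :=
    by
    rw [div_le_div_iff₀ hden hx2]
    nlinarith [hnum, hx2, mul_nonneg (abs_nonneg (a * x + b)) (Real.exp_pos (x * s - x ^ 2)).le,
      mul_nonneg (mul_nonneg (by positivity : (0:ℝ) ≤ |a| * x + |b|) (Real.exp_pos (s ^ 2 / 4)).le) (le_of_lt hx2)]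
  calc |C| * (|a * x + b| * Real.exp (x * s - x ^ 2) / (x ^ 2 + 1 / 2))
      ≤ |C| * ((|a| * x + |b|) * Real.exp (s ^ 2 / 4) / x ^ 2) :=
        mul_le_mul_of_nonneg_left hfrac (abs_nonneg C)
    _ = |C| * Real.exp (s ^ 2 / 4) * (|a| * x⁻¹ + |b| * (x ^ 2)⁻¹) := by
        have hxne : (x : ℝ) ≠ 0 := hx0.ne'
        field_simp


set_option maxHeartbeats 2000000 in
lemma main_calc (w z : ℝ) :
    ∫ x : ℝ, (2 * x ^ 2 * w ^ 2 - 4 * x * w + w ^ 2 + 4) * Real.exp (x * w - w ^ 2 / 4) *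
        ((2 * x ^ 2 * z ^ 2 - 4 * x * z + z ^ 2 + 4) * Real.exp (x * z - z ^ 2 / 4)) *
        Real.exp (-x ^ 2) / (x ^ 2 + 1 / 2) ^ 2 =
      4 * Real.exp (w * z / 2) * (w ^ 2 * z ^ 2 - 4 * w * z + 8) * Real.sqrt Real.pi := by
  -- notation
  set D : ℝ := Real.exp (-((w ^ 2 + z ^ 2) / 4)) with hD
  set E : ℝ → ℝ := fun x => Real.exp (x * (w + z) - x ^ 2) with hE
  set K : ℝ := 16 * D * ((w * z) ^ 2 / 4 - w * z + 2) with hK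
  set g : ℝ → ℝ := fun x =>
    (2 * x ^ 2 * w ^ 2 - 4 * x * w + w ^ 2 + 4) * (2 * x ^ 2 * z ^ 2 - 4 * x * z + z ^ 2 + 4) *
      (D * E x) / (x ^ 2 + 1 / 2) ^ 2 with hg
  set F : ℝ → ℝ := fun t => 16 * D *
      (((1 - w * z / 2) * t + (w + z) / 2) * E t / (t ^ 2 + 1 / 2)) with hF
  -- rewrite the integrand
  have hstep : (∫ x : ℝ, (2 * x ^ 2 * w ^ 2 - 4 * x * w + w ^ 2 + 4) *
        Real.exp (x * w - w ^ 2 / 4) *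
        ((2 * x ^ 2 * z ^ 2 - 4 * x * z + z ^ 2 + 4) * Real.exp (x * z - z ^ 2 / 4)) *
        Real.exp (-x ^ 2) / (x ^ 2 + 1 / 2) ^ 2) = ∫ x : ℝ, g x := by
    congr 1
    funext x
    have h2 : Real.exp (x * w - w ^ 2 / 4) * Real.exp (x * z - z ^ 2 / 4) * Real.exp (-x ^ 2)
        = D * E x := by
      rw [hD, hE, ← Real.exp_add, ← Real.exp_add, ← Real.exp_add]
      congr 1
      ring
    rw [hg]
    linear_combination ((2 * x ^ 2 * w ^ 2 - 4 * x * w + w ^ 2 + 4) *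
      (2 * x ^ 2 * z ^ 2 - 4 * x * z + z ^ 2 + 4) / (x ^ 2 + 1 / 2) ^ 2) * h2
  rw [hstep]
  -- integrability of E
  have hEi : Integrable E := int_gauss (w + z)
  -- integrability of g via a polynomial majorant
  have hgi : Integrable g := by
    have hMi : Integrable (fun x : ℝ =>
        4 * D * (((2 * w ^ 2 + 2) * x ^ 2 + (3 * w ^ 2 + 4)) *
          ((2 * z ^ 2 + 2) * x ^ 2 + (3 * z ^ 2 + 4))) * E x) := by
      have h4 := (int_pow_gauss 4 (w + z)).const_mul (4 * D * ((2 * w ^ 2 + 2) * (2 * z ^ 2 + 2)))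
      have h2' := (int_pow_gauss 2 (w + z)).const_mul (4 * D *
        ((2 * w ^ 2 + 2) * (3 * z ^ 2 + 4) + (3 * w ^ 2 + 4) * (2 * z ^ 2 + 2)))
      have h0 := (int_pow_gauss 0 (w + z)).const_mul (4 * D * ((3 * w ^ 2 + 4) * (3 * z ^ 2 + 4)))
      have := (h4.add h2').add h0
      apply this.congr
      refine Filter.Eventually.of_forall fun x => ?_
      simp only [Pi.add_apply]
      show _ = 4 * D * _ * E x
      rw [hE]
      ring
    have hmeas : AEStronglyMeasurable g volume := by
      have : Continuous g := by
        rw [hg, hE]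
        apply Continuous.div
        · fun_prop
        · fun_prop
        · intro x; positivity
      exact this.aestronglyMeasurable
    apply Integrable.mono' hMi hmeas
    refine Filter.Eventually.of_forall fun x => ?_
    have hden : (0 : ℝ) < (x ^ 2 + 1 / 2) ^ 2 := by positivity
    have hDE : (0 : ℝ) < D * E x := by rw [hD, hE]; positivity
    have hB1 : |2 * x ^ 2 * w ^ 2 - 4 * x * w + w ^ 2 + 4|
        ≤ (2 * w ^ 2 + 2) * x ^ 2 + (3 * w ^ 2 + 4) := by
      rw [abs_le]
      constructor
      · nlinarith [sq_nonneg (2 * x * w - 1), sq_nonneg x, sq_nonneg w]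
      · nlinarith [sq_nonneg (x + w)]
    have hB2 : |2 * x ^ 2 * z ^ 2 - 4 * x * z + z ^ 2 + 4|
        ≤ (2 * z ^ 2 + 2) * x ^ 2 + (3 * z ^ 2 + 4) := by
      rw [abs_le]
      constructor
      · nlinarith [sq_nonneg (2 * x * z - 1), sq_nonneg x, sq_nonneg z]
      · nlinarith [sq_nonneg (x + z)]
    have hB1n : (0 : ℝ) ≤ (2 * w ^ 2 + 2) * x ^ 2 + (3 * w ^ 2 + 4) := by positivity
    have hB2n : (0 : ℝ) ≤ (2 * z ^ 2 + 2) * x ^ 2 + (3 * z ^ 2 + 4) := by positivity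
    rw [Real.norm_eq_abs, hg]
    show |_ * _ * (D * E x) / (x ^ 2 + 1 / 2) ^ 2| ≤ _
    rw [abs_div, abs_mul, abs_mul, abs_of_pos hDE, abs_of_pos hden]
    have hnum : |2 * x ^ 2 * w ^ 2 - 4 * x * w + w ^ 2 + 4| *
          |2 * x ^ 2 * z ^ 2 - 4 * x * z + z ^ 2 + 4| * (D * E x)
        ≤ ((2 * w ^ 2 + 2) * x ^ 2 + (3 * w ^ 2 + 4)) *
          ((2 * z ^ 2 + 2) * x ^ 2 + (3 * z ^ 2 + 4)) * (D * E x) := by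
      apply mul_le_mul_of_nonneg_right _ hDE.le
      exact mul_le_mul hB1 hB2 (abs_nonneg _) hB1n
    have hq : (1 : ℝ) / 4 ≤ (x ^ 2 + 1 / 2) ^ 2 := by nlinarith [sq_nonneg x, sq_nonneg (x ^ 2)]
    calc |2 * x ^ 2 * w ^ 2 - 4 * x * w + w ^ 2 + 4| *
          |2 * x ^ 2 * z ^ 2 - 4 * x * z + z ^ 2 + 4| * (D * E x) / (x ^ 2 + 1 / 2) ^ 2
        ≤ ((2 * w ^ 2 + 2) * x ^ 2 + (3 * w ^ 2 + 4)) *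
          ((2 * z ^ 2 + 2) * x ^ 2 + (3 * z ^ 2 + 4)) * (D * E x) / (x ^ 2 + 1 / 2) ^ 2 := by
          exact (div_le_div_iff_of_pos_right hden).mpr hnum
      _ ≤ 4 * D * (((2 * w ^ 2 + 2) * x ^ 2 + (3 * w ^ 2 + 4)) *
          ((2 * z ^ 2 + 2) * x ^ 2 + (3 * z ^ 2 + 4))) * E x := by
          rw [div_le_iff₀ hden]
          nlinarith [mul_nonneg (mul_nonneg hB1n hB2n) hDE.le, hq]
  -- integrability of the difference
  have hGi : Integrable (fun x : ℝ => g x - K * E x) := hgi.sub (hEi.const_mul K)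
  -- derivative identity
  have hd : ∀ x : ℝ, HasDerivAt F (g x - K * E x) x := fun x => by
    have := key_deriv w z x
    rw [hF, hg, hE, hK, hD]
    exact this
  -- F tends to zero at both ends
  have hFtop : Tendsto F atTop (nhds 0) := by
    have := tendsto_aux_top (16 * D) (1 - w * z / 2) ((w + z) / 2) (w + z)
    apply this.congr fun t => ?_
    rw [hF, hE]
  have hFbot : Tendsto (fun t : ℝ => F (-t)) atTop (nhds 0) := by
    have h := tendsto_aux_top (16 * D) (-(1 - w * z / 2)) ((w + z) / 2) (-(w + z))
    apply h.congr fun t => ?_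
    simp only [hF, hE]
    have h1 : -t * (w + z) - (-t) ^ 2 = t * (-(w + z)) - t ^ 2 := by ring
    rw [h1]
    ring
  -- the derivative term integrates to zero
  have hzero : ∫ x : ℝ, (g x - K * E x) = 0 := by
    have T1 := MeasureTheory.intervalIntegral_tendsto_integral hGi
      tendsto_neg_atTop_atBot tendsto_id
    have T2 : ∀ T : ℝ, ∫ x in (-T)..T, (g x - K * E x) = F T - F (-T) := fun T =>
      intervalIntegral.integral_eq_sub_of_hasDerivAt (fun x _ => hd x)
        hGi.intervalIntegrable
    have T3 : Tendsto (fun T : ℝ => F T - F (-T)) atTop (nhds 0) := by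
      simpa using hFtop.sub hFbot
    exact tendsto_nhds_unique (T1.congr fun T => T2 T) T3
  -- final computation
  have hsplit : ∫ x : ℝ, g x = K * ∫ x : ℝ, E x := by
    calc ∫ x : ℝ, g x = ∫ x : ℝ, (K * E x + (g x - K * E x)) := by
          congr 1; funext x; ring
      _ = (∫ x : ℝ, K * E x) + ∫ x : ℝ, (g x - K * E x) :=
          integral_add (hEi.const_mul K) hGi
      _ = K * ∫ x : ℝ, E x := by rw [hzero, integral_const_mul]; ring
  rw [hsplit, hE]
  rw [int_gauss_eq (w + z)]
  have hfin : D * Real.exp ((w + z) ^ 2 / 4) = Real.exp (w * z / 2) := by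
    rw [hD, ← Real.exp_add]
    congr 1
    ring
  rw [hK]
  linear_combination (16 * ((w * z) ^ 2 / 4 - w * z + 2) * Real.sqrt Real.pi) * hfin

/-- `∫ ψ(x,w) ψ(x,z) e^{-x²}/(x²+1/2)² dx = 4 e^{wz/2} (w²z² - 4wz + 8) √π`
with `ψ(x,z) = (2x²z² - 4xz + z² + 4) e^{xz - z²/4}`. -/
theorem stmt_12 (w z : ℝ) (ψ : ℝ → ℝ → ℝ)
    (hψ : ∀ x z : ℝ, ψ x z = (2 * x ^ 2 * z ^ 2 - 4 * x * z + z ^ 2 + 4) *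
      Real.exp (x * z - z ^ 2 / 4)) :
    ∫ x : ℝ, ψ x w * ψ x z * Real.exp (-x ^ 2) / (x ^ 2 + 1 / 2) ^ 2 =
      4 * Real.exp (w * z / 2) * (w ^ 2 * z ^ 2 - 4 * w * z + 8) * Real.sqrt Real.pi := by
  simp only [hψ]
  exact main_calc w z
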